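/- arXiv:0801.2555 — 3 statements merged into one kernel-verified Lean document; each statement's English description precedes it below -/
import Mathlib

section
/- Let W be a symmetric positive definite N×N real matrix and S an N×m real matrix of full column rank m. Then the limit as ρ → ∞ of (ρSSᵀ + W)⁻¹ equals W⁻¹ - W⁻¹S(SᵀW⁻¹S)⁻¹SᵀW⁻¹. -/
open Matrix Filter

theorem limit_inverse_rho_SSt_plus_W {N m : ℕ}
    (W : Matrix (Fin N) (Fin N) ℝ) (S : Matrix (Fin N) (Fin m) ℝ)
    (hW : W.PosDef) (hS : S.rank = m) :
    Tendsto (fun ρ : ℝ => (ρ • (S * Sᵀ) + W)⁻¹) atTop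
      (nhds (W⁻¹ - W⁻¹ * S * (Sᵀ * W⁻¹ * S)⁻¹ * Sᵀ * W⁻¹)) := by
  set M : Matrix (Fin m) (Fin m) ℝ := Sᵀ * W⁻¹ * S with hMdef
  -- S has trivial kernel
  have hinj : ∀ x : Fin m → ℝ, x ≠ 0 → S *ᵥ x ≠ 0 := by
    have h1 := S.mulVecLin.finrank_range_add_finrank_ker
    rw [Matrix.rank] at hS
    rw [hS, Module.finrank_fin_fun] at h1
    have hker : LinearMap.ker S.mulVecLin = ⊥ := by
      have : Module.finrank ℝ (LinearMap.ker S.mulVecLin) = 0 := by omega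
      exact Submodule.finrank_eq_zero.mp this
    intro x hx
    intro h
    exact hx (by simpa [hker] using (Submodule.eq_bot_iff _).mp hker x (by simpa using h))
  have hWinv : (W⁻¹).PosDef := hW.inv
  have hM : M.PosDef := by
    refine Matrix.PosDef.of_dotProduct_mulVec_pos ?_ ?_
    · have := Matrix.isHermitian_conjTranspose_mul_mul S hWinv.isHermitian
      simpa [Matrix.conjTranspose_eq_transpose_of_trivial] using this
    · intro x hx
      have h2 := hWinv.dotProduct_mulVec_pos (hinj x hx)
      simpa [hMdef, Matrix.dotProduct_mulVec, Matrix.vecMul_vecMul, ← Matrix.mulVec_transpose,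
        Matrix.dotProduct_mulVec, Matrix.mul_assoc] using h2
  have hdet : M.det ≠ 0 := hM.det_pos.ne'
  -- eventual equality via Woodbury
  have heq : ∀ᶠ ρ : ℝ in atTop,
      (ρ • (S * Sᵀ) + W)⁻¹ =
        W⁻¹ - W⁻¹ * S * ((ρ⁻¹ • (1 : Matrix (Fin m) (Fin m) ℝ)) + M)⁻¹ * Sᵀ * W⁻¹ := by
    filter_upwards [eventually_gt_atTop 0] with ρ hρ
    have hC : IsUnit (ρ • (1 : Matrix (Fin m) (Fin m) ℝ)) := by
      rw [Matrix.isUnit_iff_isUnit_det, Matrix.det_smul, Matrix.det_one, mul_one, Fintype.card_fin]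
      exact (pow_pos hρ m).ne'.isUnit
    have hCinv : (ρ • (1 : Matrix (Fin m) (Fin m) ℝ))⁻¹ = ρ⁻¹ • 1 := by
      apply Matrix.inv_eq_right_inv
      rw [Matrix.smul_mul, Matrix.one_mul, smul_smul, mul_inv_cancel₀ hρ.ne', one_smul]
    have hsemi : (ρ⁻¹ • (1 : Matrix (Fin m) (Fin m) ℝ)).PosSemidef := by
      rw [smul_one_eq_diagonal]
      exact Matrix.posSemidef_diagonal_iff.mpr fun i => by positivity
    have hAC : IsUnit ((ρ • (1 : Matrix (Fin m) (Fin m) ℝ))⁻¹ + Sᵀ * W⁻¹ * S) := by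
      rw [hCinv]
      exact (Matrix.PosDef.posSemidef_add hsemi hM).isUnit
    have hw := Matrix.add_mul_mul_inv_eq_sub W S (ρ • 1) Sᵀ hW.isUnit hC hAC
    rw [hCinv] at hw
    have hrw : ρ • (S * Sᵀ) + W = W + S * (ρ • (1 : Matrix (Fin m) (Fin m) ℝ)) * Sᵀ := by
      rw [Matrix.mul_smul, Matrix.mul_one, Matrix.smul_mul, add_comm]
    rw [hrw, hw, hMdef]
  -- continuity of the Woodbury expression at ε = 0
  have hc1 : Continuous fun ε : ℝ => (ε • (1 : Matrix (Fin m) (Fin m) ℝ)) + M := by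
    apply Continuous.add _ continuous_const
    exact continuous_id.smul continuous_const
  have hc2 : ContinuousAt (fun ε : ℝ => ((ε • (1 : Matrix (Fin m) (Fin m) ℝ)) + M)⁻¹) 0 := by
    simp only [Matrix.inv_def, Ring.inverse_eq_inv']
    apply ContinuousAt.smul (f := fun ε : ℝ => ((ε • (1 : Matrix (Fin m) (Fin m) ℝ)) + M).det⁻¹)
      (g := fun ε : ℝ => ((ε • (1 : Matrix (Fin m) (Fin m) ℝ)) + M).adjugate)
    · apply ContinuousAt.inv₀ hc1.matrix_det.continuousAt
      simpa using hdet
    · exact hc1.matrix_adjugate.continuousAt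
  have hc3 : ContinuousAt (fun ε : ℝ =>
      W⁻¹ - W⁻¹ * S * ((ε • (1 : Matrix (Fin m) (Fin m) ℝ)) + M)⁻¹ * Sᵀ * W⁻¹) 0 := by
    have hout : Continuous fun X : Matrix (Fin m) (Fin m) ℝ =>
        W⁻¹ - W⁻¹ * S * X * Sᵀ * W⁻¹ :=
      continuous_const.sub
        ((((continuous_const.matrix_mul continuous_id).matrix_mul
          continuous_const).matrix_mul continuous_const))
    exact hout.continuousAt.comp hc2
  have hT : Tendsto (fun ρ : ℝ =>
      W⁻¹ - W⁻¹ * S * ((ρ⁻¹ • (1 : Matrix (Fin m) (Fin m) ℝ)) + M)⁻¹ * Sᵀ * W⁻¹) atTop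
      (nhds (W⁻¹ - W⁻¹ * S * M⁻¹ * Sᵀ * W⁻¹)) := by
    have h := hc3.tendsto.comp tendsto_inv_atTop_zero
    simpa [Function.comp_def] using h
  exact hT.congr' (heq.mono fun ρ h => h.symm)
end

section
/- Let W be a symmetric positive definite N×N real matrix and S an N×m real matrix of full column rank m. Then the limit as ρ → ∞ of ρSᵀ(ρSSᵀ + W)⁻¹ equals (SᵀW⁻¹S)⁻¹SᵀW⁻¹. -/
open Matrix Filter

private lemma smul_posSemidef {n : ℕ} {M : Matrix (Fin n) (Fin n) ℝ}
    (hM : M.PosSemidef) {ρ : ℝ} (hρ : 0 ≤ ρ) : (ρ • M).PosSemidef := by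
  refine posSemidef_iff_dotProduct_mulVec.mpr ⟨?_, fun x => ?_⟩
  · unfold Matrix.IsHermitian
    rw [conjTranspose_smul, hM.1.eq]
    simp
  · rw [smul_mulVec, dotProduct_smul]
    exact mul_nonneg hρ (hM.dotProduct_mulVec_nonneg x)

private lemma injective_of_rank {N m : ℕ} (S : Matrix (Fin N) (Fin m) ℝ)
    (hS : S.rank = m) : ∀ x : Fin m → ℝ, S *ᵥ x = 0 → x = 0 := by
  have hrn := S.mulVecLin.finrank_range_add_finrank_ker
  rw [show Module.finrank ℝ (LinearMap.range S.mulVecLin) = S.rank from rfl, hS] at hrn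
  simp only [Module.finrank_fin_fun] at hrn
  have hker : LinearMap.ker S.mulVecLin = ⊥ := by
    apply Submodule.finrank_eq_zero.mp
    omega
  intro x hx
  have : x ∈ LinearMap.ker S.mulVecLin := hx
  rwa [hker, Submodule.mem_bot] at this

theorem limit_rho_St_inverse {N m : ℕ}
    (W : Matrix (Fin N) (Fin N) ℝ) (S : Matrix (Fin N) (Fin m) ℝ)
    (hW : W.PosDef) (hS : S.rank = m) :
    Tendsto (fun ρ : ℝ => ρ • (Sᵀ * (ρ • (S * Sᵀ) + W)⁻¹)) atTop
      (nhds ((Sᵀ * W⁻¹ * S)⁻¹ * Sᵀ * W⁻¹)) := by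
  set A : Matrix (Fin m) (Fin m) ℝ := Sᵀ * W⁻¹ * S with hA_def
  have hWinv : W⁻¹.PosDef := hW.inv
  have hWdet : IsUnit W.det := hW.det_pos.ne'.isUnit
  have hSinj := injective_of_rank S hS
  -- A is positive definite
  have hA : A.PosDef := by
    refine posDef_iff_dotProduct_mulVec.mpr ⟨?_, fun x hx => ?_⟩
    · have := isHermitian_conjTranspose_mul_mul S hWinv.isHermitian
      simpa using this
    · have hSx : S *ᵥ x ≠ 0 := fun h => hx (hSinj x h)
      have : star x ⬝ᵥ (A *ᵥ x) = star (S *ᵥ x) ⬝ᵥ (W⁻¹ *ᵥ (S *ᵥ x)) := by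
        rw [hA_def, ← mulVec_mulVec, ← mulVec_mulVec]
        simp only [star_trivial]
        rw [dotProduct_mulVec, vecMul_transpose]
      rw [this]
      exact hWinv.dotProduct_mulVec_pos hSx
  have hAdet : IsUnit A.det := hA.det_pos.ne'.isUnit
  -- eventual equality
  have hev : ∀ᶠ ρ : ℝ in atTop,
      ρ • (Sᵀ * (ρ • (S * Sᵀ) + W)⁻¹) = (A + ρ⁻¹ • 1)⁻¹ * (Sᵀ * W⁻¹) := by
    filter_upwards [eventually_gt_atTop (0 : ℝ)] with ρ hρ
    have hSSt : (S * Sᵀ).PosSemidef := by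
      simpa using Matrix.posSemidef_self_mul_conjTranspose S
    have hB : (ρ • (S * Sᵀ) + W).PosDef :=
      Matrix.PosDef.posSemidef_add (smul_posSemidef hSSt hρ.le) hW
    have hC : (ρ • A + 1).PosDef :=
      Matrix.PosDef.posSemidef_add (smul_posSemidef hA.posSemidef hρ.le) Matrix.PosDef.one
    have hBdet : IsUnit (ρ • (S * Sᵀ) + W).det := hB.det_pos.ne'.isUnit
    have hCdet : IsUnit (ρ • A + 1).det := hC.det_pos.ne'.isUnit
    -- key identity
    have key : Sᵀ * W⁻¹ * (ρ • (S * Sᵀ) + W) = (ρ • A + 1) * Sᵀ := by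
      rw [Matrix.mul_add, Matrix.add_mul, Matrix.mul_smul, Matrix.smul_mul]
      rw [Matrix.mul_assoc (Sᵀ) W⁻¹ W, Matrix.nonsing_inv_mul W hWdet]
      rw [Matrix.mul_one, Matrix.one_mul, hA_def]
      simp only [Matrix.mul_assoc]
    have key2 : Sᵀ * (ρ • (S * Sᵀ) + W)⁻¹ = (ρ • A + 1)⁻¹ * (Sᵀ * W⁻¹) := by
      have h1 : Sᵀ * W⁻¹ * (ρ • (S * Sᵀ) + W) * (ρ • (S * Sᵀ) + W)⁻¹
          = (ρ • A + 1) * Sᵀ * (ρ • (S * Sᵀ) + W)⁻¹ := by rw [key]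
      rw [Matrix.mul_assoc (Sᵀ * W⁻¹), Matrix.mul_nonsing_inv _ hBdet, Matrix.mul_one] at h1
      have h2 : (ρ • A + 1) * (Sᵀ * (ρ • (S * Sᵀ) + W)⁻¹) = Sᵀ * W⁻¹ := by
        rw [h1, Matrix.mul_assoc]
      rw [← h2, ← Matrix.mul_assoc, Matrix.nonsing_inv_mul _ hCdet, Matrix.one_mul]
    have hsm : (ρ⁻¹ • (ρ • A + 1)) = A + ρ⁻¹ • 1 := by
      rw [smul_add, smul_smul, inv_mul_cancel₀ hρ.ne', one_smul]
    have hscal : ρ • (ρ • A + 1)⁻¹ = (A + ρ⁻¹ • 1)⁻¹ := by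
      letI : Invertible (ρ⁻¹) := invertibleOfNonzero (inv_ne_zero hρ.ne')
      rw [← hsm, Matrix.inv_smul (k := ρ⁻¹) (h := hCdet), invOf_eq_inv, inv_inv]
    rw [key2, ← Matrix.smul_mul, hscal]
  refine (Tendsto.congr' (hev.mono fun _ h => h.symm) ?_)
  -- continuity argument
  have h1 : Tendsto (fun ρ : ℝ => A + ρ⁻¹ • (1 : Matrix (Fin m) (Fin m) ℝ)) atTop (nhds A) := by
    have : Tendsto (fun ρ : ℝ => ρ⁻¹) atTop (nhds 0) := tendsto_inv_atTop_zero
    have h2 : Tendsto (fun ρ : ℝ => ρ⁻¹ • (1 : Matrix (Fin m) (Fin m) ℝ)) atTop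
        (nhds ((0 : ℝ) • (1 : Matrix (Fin m) (Fin m) ℝ))) :=
      this.smul tendsto_const_nhds
    rw [zero_smul] at h2
    simpa using (tendsto_const_nhds (x := A)).add h2
  have hcont : ContinuousAt Inv.inv A := by
    apply continuousAt_matrix_inv
    have : A.det ≠ 0 := by
      intro h
      rw [h] at hAdet
      simp at hAdet
    have : ContinuousAt (fun x : ℝ => x⁻¹) A.det := continuousAt_inv₀ this
    refine this.congr ?_
    filter_upwards with x
    simp [Ring.inverse_eq_inv']
  have h3 : Tendsto (fun ρ : ℝ => (A + ρ⁻¹ • (1 : Matrix (Fin m) (Fin m) ℝ))⁻¹) atTop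
      (nhds A⁻¹) := hcont.tendsto.comp h1
  have hmul : Continuous (fun B : Matrix (Fin m) (Fin m) ℝ => B * (Sᵀ * W⁻¹)) :=
    continuous_id.matrix_mul continuous_const
  have h4 : Tendsto (fun ρ : ℝ => (A + ρ⁻¹ • (1 : Matrix (Fin m) (Fin m) ℝ))⁻¹ * (Sᵀ * W⁻¹))
      atTop (nhds (A⁻¹ * (Sᵀ * W⁻¹))) := (hmul.tendsto _).comp h3
  rw [show (Sᵀ * W⁻¹ * S)⁻¹ * Sᵀ * W⁻¹ = A⁻¹ * (Sᵀ * W⁻¹) by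
    rw [hA_def, Matrix.mul_assoc]]
  exact h4
end

section
/- Let W be a symmetric positive definite N×N real matrix and S an N×m real matrix of full column rank m. Then the limit as ρ → ∞ of ρI_m - ρ²Sᵀ(ρSSᵀ + W)⁻¹S equals (SᵀW⁻¹S)⁻¹. -/
open Matrix Filter

private lemma posSemidef_smul' {n : ℕ} {M : Matrix (Fin n) (Fin n) ℝ}
    (hM : M.PosSemidef) {c : ℝ} (hc : 0 ≤ c) : (c • M).PosSemidef := by
  rw [posSemidef_iff_dotProduct_mulVec]
  constructor
  · show (c • M)ᴴ = c • M
    rw [conjTranspose_smul, hM.1.eq, star_trivial]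
  · intro x
    simp only [smul_mulVec, dotProduct_smul, smul_eq_mul]
    exact mul_nonneg hc (hM.dotProduct_mulVec_nonneg x)

private lemma inv_eq_aux {m : ℕ} (X A : Matrix (Fin m) (Fin m) ℝ) (ρ : ℝ) (hρ : 0 < ρ)
    (key2 : ρ • (X * A) + X = A) :
    (ρ⁻¹ • (1 : Matrix (Fin m) (Fin m) ℝ) + A)⁻¹ = ρ • 1 - (ρ ^ 2) • X := by
  have e1 : ρ • (X * A) = A - X := eq_sub_of_add_eq key2
  have h : (ρ • (1 : Matrix (Fin m) (Fin m) ℝ) - (ρ ^ 2) • X) * (1 + ρ • A)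
      = ρ • (1 : Matrix (Fin m) (Fin m) ℝ) := by
    calc (ρ • (1 : Matrix (Fin m) (Fin m) ℝ) - (ρ ^ 2) • X) * (1 + ρ • A)
        = ρ • (1 : Matrix (Fin m) (Fin m) ℝ) + ρ • (ρ • A)
            - ((ρ ^ 2) • X + (ρ ^ 2) • (ρ • (X * A))) := by
          simp only [sub_mul, mul_add, mul_one, smul_mul_assoc, one_mul, mul_smul_comm]
          module
      _ = ρ • (1 : Matrix (Fin m) (Fin m) ℝ) + ρ • (ρ • A)
            - ((ρ ^ 2) • X + (ρ ^ 2) • (A - X)) := by rw [e1]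
      _ = ρ • (1 : Matrix (Fin m) (Fin m) ℝ) := by module
  have hleft : (ρ • (1 : Matrix (Fin m) (Fin m) ℝ) - (ρ ^ 2) • X)
      * (ρ⁻¹ • (1 : Matrix (Fin m) (Fin m) ℝ) + A) = 1 := by
    have hsplit : ρ⁻¹ • (1 : Matrix (Fin m) (Fin m) ℝ) + A
        = ρ⁻¹ • ((1 : Matrix (Fin m) (Fin m) ℝ) + ρ • A) := by
      rw [smul_add, smul_smul, inv_mul_cancel₀ hρ.ne', one_smul]
    rw [hsplit, mul_smul_comm, h, smul_smul, inv_mul_cancel₀ hρ.ne', one_smul]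
  exact Matrix.inv_eq_left_inv hleft

theorem limit_rhoI_minus_rhosq {N m : ℕ}
    (W : Matrix (Fin N) (Fin N) ℝ) (S : Matrix (Fin N) (Fin m) ℝ)
    (hW : W.PosDef) (hS : S.rank = m) :
    Tendsto (fun ρ : ℝ => ρ • (1 : Matrix (Fin m) (Fin m) ℝ)
        - (ρ ^ 2) • (Sᵀ * (ρ • (S * Sᵀ) + W)⁻¹ * S)) atTop
      (nhds ((Sᵀ * W⁻¹ * S)⁻¹)) := by
  have hdetW : IsUnit W.det := hW.det_pos.ne'.isUnit
  -- S has injective mulVec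
  have hinj : Function.Injective S.mulVec := by
    have h1 := S.mulVecLin.finrank_range_add_finrank_ker
    have h2 : Module.finrank ℝ (LinearMap.range S.mulVecLin) = m := hS
    have h3 : Module.finrank ℝ (Fin m → ℝ) = m := by simp
    rw [h2, h3] at h1
    have hker : LinearMap.ker S.mulVecLin = ⊥ :=
      Submodule.finrank_eq_zero.mp (by omega)
    have := LinearMap.ker_eq_bot.mp hker
    simpa [Matrix.coe_mulVecLin] using this
  have hST : Sᴴ = Sᵀ := Matrix.conjTranspose_eq_transpose_of_trivial S
  -- A is positive definite
  have hA : (Sᵀ * W⁻¹ * S).PosDef := by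
    rw [← hST]
    refine Matrix.PosDef.of_dotProduct_mulVec_pos (Matrix.isHermitian_conjTranspose_mul_mul S hW.inv.isHermitian) fun x hx => ?_
    have hSx : S *ᵥ x ≠ 0 := fun h => hx (hinj (by simpa using h))
    have := hW.inv.dotProduct_mulVec_pos hSx
    simpa only [star_mulVec, dotProduct_mulVec, vecMul_vecMul] using this
  have hdetA : (Sᵀ * W⁻¹ * S).det ≠ 0 := hA.det_pos.ne'
  have hSS : (S * Sᵀ).PosSemidef := by
    simpa [hST] using Matrix.posSemidef_self_mul_conjTranspose S
  -- main eventual identity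
  have hev : ∀ ρ : ℝ, 0 < ρ →
      (ρ⁻¹ • (1 : Matrix (Fin m) (Fin m) ℝ) + Sᵀ * W⁻¹ * S)⁻¹
        = ρ • (1 : Matrix (Fin m) (Fin m) ℝ)
          - (ρ ^ 2) • (Sᵀ * (ρ • (S * Sᵀ) + W)⁻¹ * S) := by
    intro ρ hρ
    have hB : (ρ • (S * Sᵀ) + W).PosDef :=
      Matrix.PosDef.posSemidef_add (posSemidef_smul' hSS hρ.le) hW
    have hdetB : IsUnit (ρ • (S * Sᵀ) + W).det := hB.det_pos.ne'.isUnit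
    have key : ρ • (Sᵀ * (ρ • (S * Sᵀ) + W)⁻¹ * (S * Sᵀ))
        + Sᵀ * (ρ • (S * Sᵀ) + W)⁻¹ * W = Sᵀ := by
      rw [← Matrix.mul_smul, ← Matrix.mul_add]
      exact Matrix.nonsing_inv_mul_cancel_right (A := ρ • (S * Sᵀ) + W) Sᵀ hdetB
    have key2 : ρ • ((Sᵀ * (ρ • (S * Sᵀ) + W)⁻¹ * S) * (Sᵀ * W⁻¹ * S))
        + Sᵀ * (ρ • (S * Sᵀ) + W)⁻¹ * S = Sᵀ * W⁻¹ * S := by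
      have h1 := congrArg (· * (W⁻¹ * S)) key
      simp only [Matrix.add_mul, Matrix.smul_mul] at h1
      rw [Matrix.mul_assoc (Sᵀ * (ρ • (S * Sᵀ) + W)⁻¹) W (W⁻¹ * S),
        Matrix.mul_nonsing_inv_cancel_left W S hdetW] at h1
      rw [show Sᵀ * (ρ • (S * Sᵀ) + W)⁻¹ * (S * Sᵀ) * (W⁻¹ * S)
          = (Sᵀ * (ρ • (S * Sᵀ) + W)⁻¹ * S) * (Sᵀ * W⁻¹ * S) by
            simp only [Matrix.mul_assoc],
        show Sᵀ * (W⁻¹ * S) = Sᵀ * W⁻¹ * S by rw [Matrix.mul_assoc]] at h1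
      exact h1
    exact inv_eq_aux _ _ ρ hρ key2
  -- convergence
  have hg : Tendsto (fun ρ : ℝ => ρ⁻¹ • (1 : Matrix (Fin m) (Fin m) ℝ) + Sᵀ * W⁻¹ * S)
      atTop (nhds (Sᵀ * W⁻¹ * S)) := by
    have h1 : Tendsto (fun ρ : ℝ => ρ⁻¹ • (1 : Matrix (Fin m) (Fin m) ℝ)) atTop
        (nhds ((0 : ℝ) • (1 : Matrix (Fin m) (Fin m) ℝ))) :=
      tendsto_inv_atTop_zero.smul_const _
    simpa using h1.add_const (Sᵀ * W⁻¹ * S)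
  have hcont : ContinuousAt Inv.inv (Sᵀ * W⁻¹ * S) := by
    refine continuousAt_matrix_inv _ ?_
    rw [Ring.inverse_eq_inv']
    exact continuousAt_inv₀ hdetA
  have htend : Tendsto
      (fun ρ : ℝ => (ρ⁻¹ • (1 : Matrix (Fin m) (Fin m) ℝ) + Sᵀ * W⁻¹ * S)⁻¹) atTop
      (nhds (Sᵀ * W⁻¹ * S)⁻¹) := hcont.tendsto.comp hg
  refine htend.congr' ?_
  filter_upwards [eventually_gt_atTop 0] with ρ hρ
  exact hev ρ hρ
end
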